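/- A permutation σ ∈ S_{2t} satisfies Val(σ) = 2t if and only if σ maps odd elements to odd elements and even elements to even elements, where Val(σ) is the sum over cycles c of σ of |odd(c) − even(c)|, with odd(c) and even(c) being the numbers of odd and even elements in the cycle c. -/

import Mathlib

/-- The valuation `Val(σ) = Σ_{c ∈ C(σ)} |odd(c) − even(c)|`, summed over the orbits of
`⟨σ⟩` (including fixed points), where `odd(c)` and `even(c)` count odd and even elements
of the orbit `c`. Here elements of `Fin n` represent `{1, ..., n}` via `x ↦ x + 1`,
so `x : Fin n` is odd iff `(x : ℕ) % 2 = 0`. -/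
noncomputable def valPerm {n : ℕ} (σ : Equiv.Perm (Fin n)) : ℤ :=
  ∑ᶠ O : MulAction.orbitRel.Quotient (Subgroup.zpowers σ) (Fin n),
    |(Nat.card {x : Fin n // x ∈ O.orbit ∧ (x : ℕ) % 2 = 0} : ℤ) -
      (Nat.card {x : Fin n // x ∈ O.orbit ∧ (x : ℕ) % 2 = 1} : ℤ)|

open MulAction

section Aux
variable {n : ℕ} (σ : Equiv.Perm (Fin n))

private lemma sum_card_orbit_inter (P : Fin n → Prop)
    [Fintype (orbitRel.Quotient (Subgroup.zpowers σ) (Fin n))] :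
    ∑ O : orbitRel.Quotient (Subgroup.zpowers σ) (Fin n),
      Nat.card {x : Fin n // x ∈ O.orbit ∧ P x} = Nat.card {x : Fin n // P x} := by
  classical
  have e : (Σ O : orbitRel.Quotient (Subgroup.zpowers σ) (Fin n),
      {x : Fin n // x ∈ O.orbit ∧ P x}) ≃ {x : Fin n // P x} :=
    { toFun := fun y => ⟨y.2.1, y.2.2.2⟩
      invFun := fun x => ⟨Quotient.mk'' x.1, x.1, orbitRel.Quotient.mem_orbit.mpr rfl, x.2⟩
      left_inv := by
        rintro ⟨O, x, hx, px⟩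
        obtain rfl := orbitRel.Quotient.mem_orbit.mp hx
        rfl
      right_inv := by rintro ⟨x, px⟩; rfl }
  have := Nat.card_congr e
  rw [← this]
  haveI : ∀ O : orbitRel.Quotient (Subgroup.zpowers σ) (Fin n),
      Fintype {x : Fin n // x ∈ O.orbit ∧ P x} := fun O => Fintype.ofFinite _
  rw [Nat.card_eq_fintype_card, Fintype.card_sigma]
  exact Finset.sum_congr rfl fun O _ => Nat.card_eq_fintype_card

private lemma orbit_parity (h : ∀ x, (σ x : ℕ) % 2 = (x : ℕ) % 2)
    {x y : Fin n} (hy : y ∈ MulAction.orbit (Subgroup.zpowers σ) x) :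
    (y : ℕ) % 2 = (x : ℕ) % 2 := by
  have h' : ∀ x : Fin n, ((σ⁻¹ x : Fin n) : ℕ) % 2 = (x : ℕ) % 2 := by
    intro x
    have := h (σ⁻¹ x)
    rw [← Equiv.Perm.mul_apply, mul_inv_cancel, Equiv.Perm.one_apply] at this
    exact this.symm
  have key : ∀ (k : ℤ) (x : Fin n), (((σ ^ k) x : Fin n) : ℕ) % 2 = (x : ℕ) % 2 := by
    intro k
    induction k using Int.induction_on with
    | zero => intro x; simp
    | succ i ih =>
        intro x
        rw [zpow_add_one, Equiv.Perm.mul_apply, ih, h]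
    | pred i ih =>
        intro x
        rw [zpow_sub_one, Equiv.Perm.mul_apply, ih, h']
  obtain ⟨⟨g, hg⟩, rfl⟩ := hy
  obtain ⟨k, rfl⟩ := hg
  exact key k x

end Aux

theorem valPerm_eq_full_iff_parity_preserving (t : ℕ) (σ : Equiv.Perm (Fin (2 * t))) :
    valPerm σ = 2 * t ↔ ∀ x : Fin (2 * t), (σ x : ℕ) % 2 = (x : ℕ) % 2 := by
  classical
  haveI : Fintype (orbitRel.Quotient (Subgroup.zpowers σ) (Fin (2 * t))) := Fintype.ofFinite _
  set f : orbitRel.Quotient (Subgroup.zpowers σ) (Fin (2 * t)) → ℕ :=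
    fun O => Nat.card {x : Fin (2 * t) // x ∈ O.orbit ∧ (x : ℕ) % 2 = 0} with hf
  set g : orbitRel.Quotient (Subgroup.zpowers σ) (Fin (2 * t)) → ℕ :=
    fun O => Nat.card {x : Fin (2 * t) // x ∈ O.orbit ∧ (x : ℕ) % 2 = 1} with hg
  have hval : valPerm σ = ∑ O, |(f O : ℤ) - (g O : ℤ)| := by
    rw [valPerm, finsum_eq_sum_of_fintype]
  -- total sum
  have hsum : ∑ O, ((f O : ℤ) + (g O : ℤ)) = 2 * t := by
    have h0 := sum_card_orbit_inter σ (fun x => (x : ℕ) % 2 = 0)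
    have h1 := sum_card_orbit_inter σ (fun x => (x : ℕ) % 2 = 1)
    have hc : Nat.card {x : Fin (2 * t) // (x : ℕ) % 2 = 0} +
        Nat.card {x : Fin (2 * t) // (x : ℕ) % 2 = 1} = 2 * t := by
      have e1 : {x : Fin (2 * t) // (x : ℕ) % 2 = 1} ≃
          {x : Fin (2 * t) // ¬ ((x : ℕ) % 2 = 0)} :=
        Equiv.subtypeEquivRight (fun x => by omega)
      rw [Nat.card_congr e1, ← Nat.card_sum, Nat.card_congr (Equiv.sumCompl _),
        Nat.card_eq_fintype_card, Fintype.card_fin]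
    have : ∑ O, ((f O : ℤ) + (g O : ℤ)) =
        ((∑ O, f O : ℕ) : ℤ) + ((∑ O, g O : ℕ) : ℤ) := by
      push_cast
      rw [Finset.sum_add_distrib]
    rw [this, hf, hg, h0, h1]
    omega
  have hle : ∀ O ∈ Finset.univ, |(f O : ℤ) - (g O : ℤ)| ≤ (f O : ℤ) + (g O : ℤ) := by
    intro O _
    have : (0 : ℤ) ≤ f O := by positivity
    have : (0 : ℤ) ≤ g O := by positivity
    rw [abs_le]; omega
  constructor
  · intro hv x
    have heq : ∀ O ∈ Finset.univ, |(f O : ℤ) - (g O : ℤ)| = (f O : ℤ) + (g O : ℤ) := by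
      rw [← Finset.sum_eq_sum_iff_of_le hle]
      rw [← hval, hsum, hv]
    by_contra hne
    set O : orbitRel.Quotient (Subgroup.zpowers σ) (Fin (2 * t)) := Quotient.mk'' x with hO
    have hxO : x ∈ O.orbit := orbitRel.Quotient.mem_orbit.mpr rfl
    have hsxO : σ x ∈ O.orbit := by
      rw [orbitRel.Quotient.mem_orbit, hO]
      apply Quotient.sound
      exact ⟨⟨σ, Subgroup.mem_zpowers σ⟩, rfl⟩
    have hfpos : f O ≠ 0 ∧ g O ≠ 0 := by
      have hone : ∀ y : Fin (2 * t), (y : ℕ) % 2 = 0 ∨ (y : ℕ) % 2 = 1 := fun y => by omega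
      rcases hone x with hx0 | hx1
      · have hs1 : ((σ x : Fin (2 * t)) : ℕ) % 2 = 1 := by
          rcases hone (σ x) with h' | h'
          · exact absurd (h'.trans hx0.symm) hne
          · exact h'
        constructor
        · have : Nonempty {y : Fin (2 * t) // y ∈ O.orbit ∧ (y : ℕ) % 2 = 0} := ⟨⟨x, hxO, hx0⟩⟩
          simp only [hf]
          exact Nat.card_ne_zero.mpr ⟨this, Subtype.finite⟩
        · have : Nonempty {y : Fin (2 * t) // y ∈ O.orbit ∧ (y : ℕ) % 2 = 1} := ⟨⟨σ x, hsxO, hs1⟩⟩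
          simp only [hg]
          exact Nat.card_ne_zero.mpr ⟨this, Subtype.finite⟩
      · have hs0 : ((σ x : Fin (2 * t)) : ℕ) % 2 = 0 := by
          rcases hone (σ x) with h' | h'
          · exact h'
          · exact absurd (h'.trans hx1.symm) hne
        constructor
        · have : Nonempty {y : Fin (2 * t) // y ∈ O.orbit ∧ (y : ℕ) % 2 = 0} := ⟨⟨σ x, hsxO, hs0⟩⟩
          simp only [hf]
          exact Nat.card_ne_zero.mpr ⟨this, Subtype.finite⟩
        · have : Nonempty {y : Fin (2 * t) // y ∈ O.orbit ∧ (y : ℕ) % 2 = 1} := ⟨⟨x, hxO, hx1⟩⟩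
          simp only [hg]
          exact Nat.card_ne_zero.mpr ⟨this, Subtype.finite⟩
    have := heq O (Finset.mem_univ O)
    have hf0 : (0 : ℤ) < f O := by
      have := hfpos.1; positivity
    have hg0 : (0 : ℤ) < g O := by
      have := hfpos.2; positivity
    rw [abs_eq (by omega : (0:ℤ) ≤ (f O : ℤ) + g O)] at this
    omega
  · intro h
    rw [hval, ← hsum]
    apply Finset.sum_congr rfl
    intro O _
    -- each orbit is monochromatic
    have mono : ∀ y z : Fin (2 * t), y ∈ O.orbit → z ∈ O.orbit →
        (y : ℕ) % 2 = (z : ℕ) % 2 := by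
      intro y z hy hz
      have hyz : y ∈ MulAction.orbit (Subgroup.zpowers σ) z := by
        have h1 := orbitRel.Quotient.mem_orbit.mp hy
        have h2 := orbitRel.Quotient.mem_orbit.mp hz
        have : (orbitRel (Subgroup.zpowers σ) (Fin (2 * t))).r y z :=
          Quotient.exact' (by rw [Quotient.mk''_eq_mk] at *; exact h1.trans h2.symm)
        exact this
      exact orbit_parity σ h hyz
    by_cases hex : ∃ y : Fin (2 * t), y ∈ O.orbit ∧ (y : ℕ) % 2 = 0
    · obtain ⟨y, hy, hy0⟩ := hex
      have : IsEmpty {x : Fin (2 * t) // x ∈ O.orbit ∧ (x : ℕ) % 2 = 1} := by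
        constructor; rintro ⟨z, hz, hz1⟩
        have := mono z y hz hy
        omega
      have hgz : g O = 0 := by simp only [hg]; exact Nat.card_of_isEmpty
      rw [hgz]; push_cast; rw [sub_zero, abs_of_nonneg (by positivity)]; ring
    · have : IsEmpty {x : Fin (2 * t) // x ∈ O.orbit ∧ (x : ℕ) % 2 = 0} := by
        constructor; rintro ⟨z, hz, hz0⟩
        exact hex ⟨z, hz, hz0⟩
      have hfz : f O = 0 := by simp only [hf]; exact Nat.card_of_isEmpty
      rw [hfz]; push_cast; rw [zero_sub, abs_neg, abs_of_nonneg (by positivity)]; ring
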